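/- Fix complex numbers q ≠ 1, α_0, α_1, α_2 and t. For ε ≠ 0 let N_ε be the 3×3 matrix obtained from B_0 + tB_1 (the coefficient matrix of the linear q-difference system attached to the quiver Q_11, with parameters α_0, α_1, α_2, α_3) by substituting α_1 := α_1/ε, α_2 := ε, α_3 := α_2 and t := εt, and let Λ_ε = diag(1, 1, −ε(1−q)). Then the entrywise limit lim_{ε→0} Λ_ε·N_ε·Λ_ε^{-1} exists and equals C_0 + tC_1, where C_0 = [[1, 0, 0], [(1−q)α_0, α_0, 0], [0, (1−q)α_0α_1, α_0α_1]] and C_1 = [[0, α_0α_1/(1−q), α_0α_1(1−α_2)/(1−q)²], [0,0,0], [0,0,0]]. (Thus the linear q-difference system of the degenerate q-Garnier system attached to the quiver Q_101 is obtained from that attached to Q_11 by this confluence procedure.) -/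

import Mathlib

open Filter Topology Matrix

noncomputable section

/-- The matrix `B₀` of the linear `q`-difference system attached to the quiver `Q_11`. -/
def B0m (q a0 a1 a2 : ℂ) : Matrix (Fin 3) (Fin 3) ℂ :=
  !![1, 0, 0;
     (1 - q) * a0, a0, 0;
     (1 - q) * a0, a0 * (1 - a1), a0 * a1 * a2]

/-- The matrix `B₁` of the linear `q`-difference system attached to the quiver `Q_11`. -/
def B1m (q a0 a1 a2 a3 : ℂ) : Matrix (Fin 3) (Fin 3) ℂ :=
  !![-a0, -(a0 * (1 - a1) / (1 - q)), -(a0 * a1 * a2 * (1 - a3) / (1 - q));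
     0, 0, 0;
     0, 0, 0]

/-- The matrix `C₀` of the linear `q`-difference system attached to the quiver `Q_101`. -/
def C0m (q a0 a1 : ℂ) : Matrix (Fin 3) (Fin 3) ℂ :=
  !![1, 0, 0;
     (1 - q) * a0, a0, 0;
     0, (1 - q) * a0 * a1, a0 * a1]

/-- The matrix `C₁` of the linear `q`-difference system attached to the quiver `Q_101`. -/
def C1m (q a0 a1 a2 : ℂ) : Matrix (Fin 3) (Fin 3) ℂ :=
  !![0, a0 * a1 / (1 - q), a0 * a1 * (1 - a2) / (1 - q) ^ 2;
     0, 0, 0;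
     0, 0, 0]

/-- Substituting `α_1 := α_1/ε`, `α_2 := ε`, `α_3 := α_2`, `t := εt`
into the coefficient matrix `B₀ + tB₁` of the linear `q`-difference system attached to
the quiver `Q_11` and conjugating by `Λ_ε = diag(1, 1, -ε(1-q))`, the entrywise limit as
`ε → 0` exists and equals `C₀ + tC₁`, the coefficient matrix attached to the quiver
`Q_101`. -/
theorem confluence_linear_system_Q11_to_Q101 (q a0 a1 a2 t : ℂ) (hq : q ≠ 1) :
    Tendsto
      (fun ε : ℂ =>
        Matrix.diagonal ![1, 1, -(ε * (1 - q))] *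
          (B0m q a0 (a1 / ε) ε + (ε * t) • B1m q a0 (a1 / ε) ε a2) *
          (Matrix.diagonal ![1, 1, -(ε * (1 - q))])⁻¹)
      (𝓝[≠] (0 : ℂ))
      (𝓝 (C0m q a0 a1 + t • C1m q a0 a1 a2)) := by
  have h1q : (1 : ℂ) - q ≠ 0 := sub_ne_zero.mpr (Ne.symm hq)
  set D : Matrix (Fin 3) (Fin 3) ℂ :=
    !![-(t * a0), -(t * a0 / (1 - q)), 0;
       0, 0, 0;
       -((1 - q) ^ 2 * a0), -((1 - q) * a0), 0] with hD
  set A : Matrix (Fin 3) (Fin 3) ℂ := C0m q a0 a1 + t • C1m q a0 a1 a2 with hA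
  have hcont : Tendsto (fun ε : ℂ => A + ε • D) (𝓝[≠] (0 : ℂ)) (𝓝 A) := by
    have : Tendsto (fun ε : ℂ => A + ε • D) (𝓝 (0 : ℂ)) (𝓝 (A + (0 : ℂ) • D)) := by
      exact (continuous_const.add (continuous_id.smul continuous_const)).tendsto 0
    simpa using this.mono_left nhdsWithin_le_nhds
  refine Tendsto.congr' ?_ hcont
  filter_upwards [self_mem_nhdsWithin] with ε hε
  have hε' : (ε : ℂ) ≠ 0 := hε
  have hL : -(ε * (1 - q)) ≠ 0 := by
    simpa using mul_ne_zero hε' h1q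
  have hinv : (Matrix.diagonal ![1, 1, -(ε * (1 - q))])⁻¹ =
      Matrix.diagonal ![(1 : ℂ), 1, (-(ε * (1 - q)))⁻¹] := by
    apply Matrix.inv_eq_right_inv
    rw [Matrix.diagonal_mul_diagonal]
    ext i j
    fin_cases i <;> fin_cases j <;>
      simp [Matrix.diagonal, Matrix.one_apply, mul_inv_cancel₀ hL] <;> field_simp
  rw [hinv]
  ext i j
  fin_cases i <;> fin_cases j <;>
    (try simp [hA, hD, B0m, B1m, C0m, C1m, Matrix.mul_apply, Fin.sum_univ_three,
      Matrix.diagonal, Matrix.vecHead, Matrix.vecTail]) <;>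
    (try field_simp) <;>
    ring
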